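/- Let Σ ∈ ℝ^{n×n} be positive definite and let f : ℝⁿ → [0,1] be measurable. Define the smoothed function g_Σ(x) = E_{ε ~ N(0,Σ)}[f(x + ε)], and assume f is neither almost everywhere 0 nor almost everywhere 1, so that 0 < g_Σ(x) < 1 for all x. Then the map x ↦ Φ⁻¹(g_Σ(x)) is 1-Lipschitz with respect to the norm ‖δ‖_{Σ,2} = √(δᵀΣ⁻¹δ); that is, |Φ⁻¹(g_Σ(x)) − Φ⁻¹(g_Σ(y))| ≤ √((x − y)ᵀΣ⁻¹(x − y)) for all x, y ∈ ℝⁿ. -/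

import Mathlib

open MeasureTheory Matrix

/-- Density of the centered Gaussian `N(0, Σ)` on ℝⁿ (w.r.t. Lebesgue measure). -/
noncomputable def gaussDensity (n : ℕ) (Sig : Matrix (Fin n) (Fin n) ℝ)
    (ε : Fin n → ℝ) : ℝ :=
  (Real.sqrt ((2 * Real.pi) ^ n * Sig.det))⁻¹ * Real.exp (-(ε ⬝ᵥ (Sig⁻¹ *ᵥ ε)) / 2)

/-- Standard Gaussian cumulative distribution function Φ on ℝ. -/
noncomputable def stdGaussianCDF (x : ℝ) : ℝ :=
  (ProbabilityTheory.gaussianReal 0 1 (Set.Iic x)).toReal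

section Aux

open ProbabilityTheory Real
open scoped MatrixOrder

lemma stdGaussianCDF_eq (t : ℝ) :
    stdGaussianCDF t = ∫ s in Set.Iic t, gaussianPDFReal 0 1 s := by
  rw [stdGaussianCDF, gaussianReal_apply_eq_integral 0 one_ne_zero,
    ENNReal.toReal_ofReal]
  exact setIntegral_nonneg measurableSet_Iic fun s _ => gaussianPDFReal_nonneg 0 1 s

lemma stdGaussianCDF_strictMono : StrictMono stdGaussianCDF := by
  intro u v huv
  rw [stdGaussianCDF_eq, stdGaussianCDF_eq]
  have h1 : Set.Iic v = Set.Iic u ∪ Set.Ioc u v := (Set.Iic_union_Ioc_eq_Iic huv.le).symm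
  rw [h1, setIntegral_union (Set.Iic_disjoint_Ioc le_rfl) measurableSet_Ioc
    ((integrable_gaussianPDFReal 0 1).integrableOn) ((integrable_gaussianPDFReal 0 1).integrableOn)]
  have hpos : 0 < ∫ s in Set.Ioc u v, gaussianPDFReal 0 1 s := by
    rw [setIntegral_pos_iff_support_of_nonneg_ae
      (ae_of_all _ fun s => gaussianPDFReal_nonneg 0 1 s)
      ((integrable_gaussianPDFReal 0 1).integrableOn)]
    have hsupp : Function.support (gaussianPDFReal 0 1) = Set.univ := by
      ext s; simp [Function.mem_support, (gaussianPDFReal_pos 0 1 s one_ne_zero).ne']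
    rw [hsupp, Set.univ_inter, Real.volume_Ioc]
    simp [huv]
  linarith

lemma gaussianPDFReal_shift (d s : ℝ) :
    gaussianPDFReal 0 1 (s + d) = Real.exp (-(d * s) - d^2/2) * gaussianPDFReal 0 1 s := by
  simp only [gaussianPDFReal, NNReal.coe_one, mul_one, sub_zero]
  rw [mul_comm (rexp _), mul_assoc, ← Real.exp_add]
  ring_nf

lemma integral_Iic_gaussianPDF_shift (a d : ℝ) :
    ∫ s in Set.Iic a, gaussianPDFReal 0 1 (s + d) = stdGaussianCDF (a + d) := by
  rw [stdGaussianCDF_eq, ← integral_indicator measurableSet_Iic,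
    ← integral_indicator measurableSet_Iic]
  rw [show (Set.Iic a).indicator (fun s => gaussianPDFReal 0 1 (s + d))
      = fun s => (Set.Iic (a+d)).indicator (gaussianPDFReal 0 1) (s + d) by
    ext s
    simp only [Set.indicator_apply, Set.mem_Iic]
    by_cases h : s ≤ a
    · rw [if_pos h, if_pos (by linarith)]
    · rw [if_neg h, if_neg (by intro hc; exact h (by linarith))]]
  exact integral_add_right_eq_self _ d

lemma measurable_mulVec' {n : ℕ} (A : Matrix (Fin n) (Fin n) ℝ) :
    Measurable fun w : Fin n → ℝ => A *ᵥ w := by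
  refine measurable_pi_lambda _ fun i => ?_
  simp only [mulVec, dotProduct]
  exact Finset.measurable_sum _ fun j _ => (measurable_const.mul (measurable_pi_apply j))

lemma integral_cov {n : ℕ} {A : Matrix (Fin n) (Fin n) ℝ} (hA : A.det ≠ 0)
    {g : (Fin n → ℝ) → ℝ} (hg : Measurable g) :
    ∫ ε, g ε = |A.det| * ∫ w, g (A *ᵥ w) := by
  have hTmeas : Measurable (Matrix.toLin' A) := by
    have h : ⇑(Matrix.toLin' A) = fun w => A *ᵥ w := by
      ext w i; rw [Matrix.toLin'_apply]
    rw [h]; exact measurable_mulVec' A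
  have h1 : ∫ w, g (A *ᵥ w) = ∫ ε, g ε ∂(Measure.map (Matrix.toLin' A) volume) := by
    rw [integral_map hTmeas.aemeasurable hg.aestronglyMeasurable]
    simp_rw [Matrix.toLin'_apply]
  rw [h1, Real.map_matrix_volume_pi_eq_smul_volume_pi hA, integral_smul_measure,
    ENNReal.toReal_ofReal (abs_nonneg _), smul_eq_mul, ← mul_assoc, ← abs_mul,
    mul_inv_cancel₀ hA, abs_one, one_mul]

lemma quad_form_comp {n : ℕ} {Sig A : Matrix (Fin n) (Fin n) ℝ}
    (hAA : A * Aᵀ = Sig) (hA : A.det ≠ 0) (w : Fin n → ℝ) :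
    (A *ᵥ w) ⬝ᵥ (Sig⁻¹ *ᵥ (A *ᵥ w)) = w ⬝ᵥ w := by
  have hAu : IsUnit A.det := isUnit_iff_ne_zero.mpr hA
  have hAtu : IsUnit Aᵀ.det := by rwa [Matrix.det_transpose]
  have h1 : Sig⁻¹ *ᵥ (A *ᵥ w) = Aᵀ⁻¹ *ᵥ w := by
    rw [← hAA, Matrix.mul_inv_rev, Matrix.mulVec_mulVec, Matrix.mul_assoc,
      Matrix.nonsing_inv_mul A hAu, Matrix.mul_one]
  rw [h1, Matrix.dotProduct_mulVec, Matrix.vecMul_mulVec, ← Matrix.transpose_nonsing_inv,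
    ← Matrix.transpose_mul, Matrix.nonsing_inv_mul A hAu, Matrix.transpose_one,
    Matrix.vecMul_one]

lemma prod_gaussianPDF_eq (n : ℕ) (w : Fin n → ℝ) :
    ∏ i, gaussianPDFReal 0 1 (w i) = ((√(2*π))^n)⁻¹ * Real.exp (-(w ⬝ᵥ w)/2) := by
  simp only [gaussianPDFReal, NNReal.coe_one, mul_one, sub_zero]
  rw [Finset.prod_mul_distrib, Finset.prod_const, Finset.card_univ, Fintype.card_fin,
    ← Real.exp_sum, inv_pow]
  congr 1
  simp [dotProduct, neg_div, Finset.sum_div, pow_two, Finset.sum_neg_distrib]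

lemma sqrt_two_pi_pow (n : ℕ) : √((2*π)^n) = (√(2*π))^n := by
  have h1 : ((2*π):ℝ)^n = ((√(2*π))^n)^2 := by
    rw [← pow_mul, mul_comm n 2, pow_mul, Real.sq_sqrt (by positivity)]
  rw [h1, Real.sqrt_sq_eq_abs, abs_of_nonneg (by positivity)]

lemma gaussDensity_comp {n : ℕ} {Sig A : Matrix (Fin n) (Fin n) ℝ}
    (hAA : A * Aᵀ = Sig) (hA : A.det ≠ 0) (w : Fin n → ℝ) :
    |A.det| * gaussDensity n Sig (A *ᵥ w) = ∏ i, gaussianPDFReal 0 1 (w i) := by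
  rw [gaussDensity, quad_form_comp hAA hA, prod_gaussianPDF_eq]
  have hdet : Sig.det = A.det ^ 2 := by rw [← hAA, Matrix.det_mul, Matrix.det_transpose, sq]
  rw [hdet, Real.sqrt_mul (by positivity), Real.sqrt_sq_eq_abs, sqrt_two_pi_pow]
  have habs : |A.det| ≠ 0 := abs_ne_zero.mpr hA
  field_simp

lemma exists_A {n : ℕ} [NeZero n] {Sig : Matrix (Fin n) (Fin n) ℝ} (hSig : Sig.PosDef)
    {δ : Fin n → ℝ} (hδ : δ ≠ 0) :
    ∃ A : Matrix (Fin n) (Fin n) ℝ, A * Aᵀ = Sig ∧ A.det ≠ 0 ∧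
      A *ᵥ Pi.single 0 (-Real.sqrt (δ ⬝ᵥ (Sig⁻¹ *ᵥ δ))) = δ := by
  classical
  have hq : 0 < δ ⬝ᵥ (Sig⁻¹ *ᵥ δ) := by
    have := hSig.inv.dotProduct_mulVec_pos hδ
    simpa using this
  set d := Real.sqrt (δ ⬝ᵥ (Sig⁻¹ *ᵥ δ)) with hd_def
  have hd : 0 < d := Real.sqrt_pos.mpr hq
  have hd2 : d ^ 2 = δ ⬝ᵥ (Sig⁻¹ *ᵥ δ) := Real.sq_sqrt hq.le
  set S := CFC.sqrt Sig with hS_def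
  have hS2 : S * S = Sig := CFC.sqrt_mul_sqrt_self Sig hSig.posSemidef.nonneg
  have hSsym : Sᵀ = S := by
    have h := (Matrix.nonneg_iff_posSemidef.mp (CFC.sqrt_nonneg Sig)).isHermitian
    rwa [Matrix.IsHermitian, conjTranspose_eq_transpose_of_trivial] at h
  have hSdet : S.det ≠ 0 := by
    intro h
    have : Sig.det = 0 := by rw [← hS2, Matrix.det_mul, h, mul_zero]
    exact hSig.det_pos.ne' this
  have hSu : IsUnit S.det := isUnit_iff_ne_zero.mpr hSdet
  have hSST : S * Sᵀ = Sig := by rw [hSsym, hS2]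
  -- the unit vector
  set w0 : Fin n → ℝ := S⁻¹ *ᵥ δ with hw0
  have hww : w0 ⬝ᵥ w0 = d ^ 2 := by
    have h1 : S *ᵥ w0 = δ := by
      rw [hw0, Matrix.mulVec_mulVec, Matrix.mul_nonsing_inv S hSu, Matrix.one_mulVec]
    have h2 := quad_form_comp hSST hSdet w0
    rw [h1] at h2
    rw [← h2, hd2]
  set v0 : EuclideanSpace ℝ (Fin n) := WithLp.toLp 2 ((-(d⁻¹)) • w0) with hv0
  have hnorm : ‖v0‖ = 1 := by
    rw [EuclideanSpace.norm_eq]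
    have : ∀ i, ‖v0 i‖ ^ 2 = d⁻¹ ^ 2 * (w0 i * w0 i) := by
      intro i
      have hvi : v0 i = -d⁻¹ * w0 i := rfl
      rw [hvi, Real.norm_eq_abs, sq_abs]
      ring
    rw [Finset.sum_congr rfl fun i _ => this i, ← Finset.mul_sum]
    have : ∑ i, w0 i * w0 i = d ^ 2 := hww
    rw [this]
    rw [inv_pow, inv_mul_cancel₀ (by positivity), Real.sqrt_one]
  have horth : Orthonormal ℝ (Set.restrict {(0 : Fin n)} (fun _ : Fin n => v0)) := by
    constructor
    · rintro ⟨i, hi⟩; exact hnorm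
    · rintro ⟨i, hi⟩ ⟨j, hj⟩ hij
      exact absurd (Subtype.ext ((Set.mem_singleton_iff.mp hi).trans
        (Set.mem_singleton_iff.mp hj).symm)) hij
  obtain ⟨b, hb⟩ := horth.exists_orthonormalBasis_extension_of_card_eq
    (by simp [finrank_euclideanSpace_fin])
  have hb0 : b 0 = v0 := hb 0 rfl
  set O : Matrix (Fin n) (Fin n) ℝ := Matrix.of (fun i j => b j i) with hO_def
  have hOrth : Oᵀ * O = 1 := by
    ext j k
    rw [Matrix.mul_apply, Matrix.one_apply]
    have := orthonormal_iff_ite.mp b.orthonormal j k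
    rw [← this]
    simp only [hO_def, Matrix.transpose_apply, Matrix.of_apply, PiLp.inner_apply,
      RCLike.inner_apply, conj_trivial]
    exact Finset.sum_congr rfl fun _ _ => mul_comm _ _
  have hOO : O * Oᵀ = 1 := mul_eq_one_comm.mp hOrth
  have hOdet : O.det ≠ 0 := by
    intro h
    have h1 : Oᵀ.det * O.det = 1 := by rw [← Matrix.det_mul, hOrth, Matrix.det_one]
    rw [h, mul_zero] at h1
    exact zero_ne_one h1
  have hOe : O *ᵥ Pi.single 0 1 = (fun i => b 0 i) := by
    ext i
    rw [Matrix.mulVec_single]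
    simp [hO_def]
  refine ⟨S * O, ?_, ?_, ?_⟩
  · rw [Matrix.transpose_mul, Matrix.mul_assoc, ← Matrix.mul_assoc O, hOO,
      Matrix.one_mul, hSsym, hS2]
  · rw [Matrix.det_mul]
    exact mul_ne_zero hSdet hOdet
  · have hsingle : Pi.single (0 : Fin n) (-d) = (-d) • (Pi.single (0 : Fin n) (1:ℝ) : Fin n → ℝ) := by
      ext i
      by_cases h : i = 0
      · subst h; simp
      · simp [Pi.single_eq_of_ne h]
    have hSw0 : S *ᵥ w0 = δ := by
      rw [hw0, Matrix.mulVec_mulVec, Matrix.mul_nonsing_inv S hSu, Matrix.one_mulVec]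
    have hb0' : (fun i => b 0 i) = (fun i => -d⁻¹ * w0 i) := by
      funext i; rw [hb0]; rfl
    have hSv0 : S *ᵥ (fun i => b 0 i) = (-(d⁻¹)) • δ := by
      rw [hb0']
      show S *ᵥ ((-d⁻¹) • w0) = (-(d⁻¹)) • δ
      rw [Matrix.mulVec_smul, hSw0]
    rw [hsingle, Matrix.mulVec_smul, ← Matrix.mulVec_mulVec, hOe, hSv0, smul_smul,
      show (-d) * (-(d⁻¹)) = 1 by field_simp]
    exact one_smul _ _

lemma key_step (n : ℕ)
    (Sig : Matrix (Fin n) (Fin n) ℝ) (hSig : Sig.PosDef)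
    (f : (Fin n → ℝ) → ℝ) (hf : Measurable f) (hf01 : ∀ v, f v ∈ Set.Icc (0:ℝ) 1)
    (gS : (Fin n → ℝ) → ℝ)
    (hgS : ∀ x, gS x = ∫ ε, f (x + ε) * gaussDensity n Sig ε)
    (hg01 : ∀ x, gS x ∈ Set.Ioo (0:ℝ) 1)
    (Φinv : ℝ → ℝ)
    (hΦinv : ∀ p ∈ Set.Ioo (0:ℝ) 1, stdGaussianCDF (Φinv p) = p)
    (x y : Fin n → ℝ) (hxy : x ≠ y) :
    Φinv (gS x) ≤ Φinv (gS y) + Real.sqrt ((x - y) ⬝ᵥ (Sig⁻¹ *ᵥ (x - y))) := by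
  classical
  have hn : n ≠ 0 := by rintro rfl; exact hxy (funext fun i => i.elim0)
  haveI : NeZero n := ⟨hn⟩
  set δ : Fin n → ℝ := x - y with hδdef
  have hδ : δ ≠ 0 := sub_ne_zero.mpr hxy
  set d : ℝ := Real.sqrt (δ ⬝ᵥ (Sig⁻¹ *ᵥ δ)) with hd_def
  have hq : 0 < δ ⬝ᵥ (Sig⁻¹ *ᵥ δ) := by
    have := hSig.inv.dotProduct_mulVec_pos hδ
    simpa using this
  have hd : 0 < d := Real.sqrt_pos.mpr hq
  obtain ⟨A, hAA, hAdet, hAe⟩ := exists_A hSig hδ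
  -- the standard product density
  set P : (Fin n → ℝ) → ℝ := fun w => ∏ i, gaussianPDFReal 0 1 (w i) with hP_def
  have hPpos : ∀ w, 0 < P w := fun w =>
    Finset.prod_pos fun i _ => gaussianPDFReal_pos 0 1 (w i) one_ne_zero
  have hPmeas : Measurable P :=
    Finset.measurable_prod _ fun i _ =>
      (measurable_gaussianPDFReal 0 1).comp (measurable_pi_apply i)
  have hPint : Integrable P := Integrable.fintype_prod fun _ => integrable_gaussianPDFReal 0 1
  -- density measurability
  have hden : Measurable (gaussDensity n Sig) := by
    apply Measurable.const_mul
    apply Real.measurable_exp.comp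
    apply Measurable.div_const
    apply Measurable.neg
    apply Finset.measurable_sum
    intro i _
    exact (measurable_pi_apply i).mul ((measurable_mulVec' Sig⁻¹).eval.comp measurable_id)
  -- gS in the new coordinates
  have hgen : ∀ z : Fin n → ℝ, gS z = ∫ w, f (z + A *ᵥ w) * P w := by
    intro z
    have hmeas1 : Measurable fun ε : Fin n → ℝ => f (z + ε) * gaussDensity n Sig ε :=
      (hf.comp (measurable_const_add z)).mul hden
    rw [hgS z, integral_cov hAdet hmeas1, ← integral_const_mul]
    congr 1
    funext w
    rw [mul_left_comm, gaussDensity_comp hAA hAdet w]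
  set G : (Fin n → ℝ) → ℝ := fun w => f (y + A *ᵥ w) with hG_def
  have hGmeas : Measurable G := hf.comp (measurable_const_add y |>.comp (measurable_mulVec' A))
  have hG01 : ∀ w, G w ∈ Set.Icc (0:ℝ) 1 := fun w => hf01 _
  set c : Fin n → ℝ := Pi.single (0 : Fin n) d with hc_def
  have hAc : A *ᵥ c = -δ := by
    have hneg : c = -(Pi.single (0 : Fin n) (-d)) := by
      funext i
      by_cases h : i = 0
      · subst h; simp [hc_def]
      · simp [hc_def, Pi.single_eq_of_ne h]
    rw [hneg, Matrix.mulVec_neg, hAe]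
  have hPshift : ∀ w, P (w + c) = Real.exp (-(d * w 0) - d^2/2) * P w := by
    intro w
    have hterm : ∀ i : Fin n, gaussianPDFReal 0 1 ((w + c) i)
        = (if i = 0 then Real.exp (-(d * w i) - d^2/2) else 1) * gaussianPDFReal 0 1 (w i) := by
      intro i
      by_cases h : i = 0
      · subst h
        simp only [Pi.add_apply, hc_def, Pi.single_eq_same, if_pos]
        exact gaussianPDFReal_shift d (w 0)
      · simp [hc_def, Pi.single_eq_of_ne h, h]
    simp only [hP_def]
    rw [Finset.prod_congr rfl fun i _ => hterm i, Finset.prod_mul_distrib,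
      Finset.prod_ite_eq' Finset.univ (0 : Fin n)
        (fun i => Real.exp (-(d * w i) - d^2/2))]
    simp
  set a : ℝ := Φinv (gS y) with ha_def
  have hΦa : stdGaussianCDF a = gS y := hΦinv _ (hg01 y)
  set E : (Fin n → ℝ) → ℝ := fun w => Real.exp (-(d * w 0) - d^2/2) with hE_def
  set Ea : ℝ := Real.exp (-(d * a) - d^2/2) with hEa_def
  set h : (Fin n → ℝ) → ℝ := fun w => if w 0 ≤ a then 1 else 0 with hh_def
  have hhmeas : Measurable h :=
    Measurable.ite (measurableSet_le (measurable_pi_apply 0) measurable_const)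
      measurable_const measurable_const
  have hEmeas : Measurable E :=
    by fun_prop
  have hEpos : ∀ w, 0 < E w := fun w => Real.exp_pos _
  have hh01 : ∀ w, 0 ≤ h w ∧ h w ≤ 1 := by
    intro w
    simp only [hh_def]
    split <;> norm_num
  -- gS x in terms of G, E, P
  have hxA : ∀ w : Fin n → ℝ, x + A *ᵥ w = y + A *ᵥ (w - c) := by
    intro w
    rw [Matrix.mulVec_sub, hAc, sub_neg_eq_add, hδdef]
    abel
  have hgx : gS x = ∫ w, G w * (E w * P w) := by
    rw [hgen x]
    calc ∫ w, f (x + A *ᵥ w) * P w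
        = ∫ w, G (w - c) * P w := by
          apply integral_congr_ae
          apply ae_of_all
          intro w
          dsimp only
          rw [hG_def]
          dsimp only
          rw [← hxA w]
      _ = ∫ w, G ((w + c) - c) * P (w + c) :=
          (integral_add_right_eq_self (fun w => G (w - c) * P w) c).symm
      _ = ∫ w, G w * (E w * P w) := by
          apply integral_congr_ae
          apply ae_of_all
          intro w
          dsimp only
          rw [add_sub_cancel_right, hPshift w]
  -- pointwise comparison
  have hpt : ∀ w, G w * (E w * P w) ≤ h w * (E w * P w) + Ea * ((G w - h w) * P w) := by
    intro w
    have hP := (hPpos w).le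
    have hkey : (G w - h w) * (E w - Ea) ≤ 0 := by
      by_cases hw : w 0 ≤ a
      · have h1 : h w = 1 := if_pos hw
        have h2 : Ea ≤ E w := by
          simp only [hE_def, hEa_def]
          apply Real.exp_le_exp.mpr
          have : d * w 0 ≤ d * a := mul_le_mul_of_nonneg_left hw hd.le
          linarith
        have h3 := (hG01 w).2
        rw [h1]
        nlinarith
      · have h1 : h w = 0 := if_neg hw
        push_neg at hw
        have h2 : E w ≤ Ea := by
          simp only [hE_def, hEa_def]
          apply Real.exp_le_exp.mpr
          have : d * a ≤ d * w 0 := mul_le_mul_of_nonneg_left hw.le hd.le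
          linarith
        have h3 := (hG01 w).1
        rw [h1]
        nlinarith
    have h3 : (G w - h w) * (E w - Ea) * P w ≤ 0 :=
      mul_nonpos_iff.mpr (Or.inr ⟨hkey, hP⟩)
    nlinarith [h3]
  -- integrability
  have hQint : Integrable (fun w => P (w + c)) := hPint.comp_add_right c
  have hEPint : Integrable (fun w => E w * P w) := by
    have he : (fun w => E w * P w) = fun w => P (w + c) := by
      funext w
      rw [hPshift w]
    rw [he]
    exact hQint
  have hGPint : Integrable (fun w => G w * P w) := by
    refine hPint.mono' ((hGmeas.mul hPmeas).aestronglyMeasurable) (ae_of_all _ fun w => ?_)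
    rw [Real.norm_eq_abs, abs_mul, abs_of_nonneg (hG01 w).1, abs_of_nonneg (hPpos w).le]
    exact mul_le_of_le_one_left (hPpos w).le (hG01 w).2
  have hhPint : Integrable (fun w => h w * P w) := by
    refine hPint.mono' ((hhmeas.mul hPmeas).aestronglyMeasurable) (ae_of_all _ fun w => ?_)
    rw [Real.norm_eq_abs, abs_mul, abs_of_nonneg (hh01 w).1, abs_of_nonneg (hPpos w).le]
    exact mul_le_of_le_one_left (hPpos w).le (hh01 w).2
  have hhEPint : Integrable (fun w => h w * (E w * P w)) := by
    refine hEPint.mono' ((hhmeas.mul (hEmeas.mul hPmeas)).aestronglyMeasurable)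
      (ae_of_all _ fun w => ?_)
    have hEP : 0 ≤ E w * P w := mul_nonneg (hEpos w).le (hPpos w).le
    rw [Real.norm_eq_abs, abs_mul, abs_of_nonneg (hh01 w).1, abs_of_nonneg hEP]
    exact mul_le_of_le_one_left hEP (hh01 w).2
  have hRHS2int : Integrable (fun w => Ea * ((G w - h w) * P w)) := by
    have he : (fun w => Ea * ((G w - h w) * P w))
        = fun w => Ea * (G w * P w - h w * P w) := by
      funext w
      ring
    rw [he]
    exact (hGPint.sub hhPint).const_mul Ea
  -- the integral inequality
  have hineq : gS x ≤ ∫ w, (h w * (E w * P w) + Ea * ((G w - h w) * P w)) := by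
    rw [hgx]
    exact integral_mono (by
      refine hEPint.mono' ((hGmeas.mul (hEmeas.mul hPmeas)).aestronglyMeasurable)
        (ae_of_all _ fun w => ?_)
      have hEP : 0 ≤ E w * P w := mul_nonneg (hEpos w).le (hPpos w).le
      rw [Real.norm_eq_abs, abs_mul, abs_of_nonneg (hG01 w).1, abs_of_nonneg hEP]
      exact mul_le_of_le_one_left hEP (hG01 w).2) (hhEPint.add hRHS2int) hpt
  have hsplit : ∫ w, (h w * (E w * P w) + Ea * ((G w - h w) * P w))
      = (∫ w, h w * (E w * P w)) + Ea * ((∫ w, G w * P w) - ∫ w, h w * P w) := by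
    rw [integral_add hhEPint hRHS2int]
    congr 1
    have he : (fun w => Ea * ((G w - h w) * P w))
        = fun w => Ea * (G w * P w - h w * P w) := by
      funext w
      ring
    rw [he, integral_const_mul, integral_sub hGPint hhPint]
  -- compute ∫ h P
  have hintP1 : ∫ w, h w * P w = stdGaussianCDF a := by
    have e : ∀ w : Fin n → ℝ, h w * P w
        = ∏ i, ((if i = 0 then (if w i ≤ a then (1:ℝ) else 0) else 1)
            * gaussianPDFReal 0 1 (w i)) := by
      intro w
      rw [Finset.prod_mul_distrib, Finset.prod_ite_eq' Finset.univ (0 : Fin n)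
        (fun i => if w i ≤ a then (1:ℝ) else 0)]
      simp only [hh_def, hP_def, Finset.mem_univ, if_true]
    calc ∫ w, h w * P w
        = ∫ w : Fin n → ℝ, ∏ i, ((if i = 0 then (if w i ≤ a then (1:ℝ) else 0) else 1)
            * gaussianPDFReal 0 1 (w i)) := integral_congr_ae (ae_of_all _ e)
      _ = ∏ i : Fin n, ∫ s : ℝ, (if i = 0 then (if s ≤ a then (1:ℝ) else 0) else 1)
            * gaussianPDFReal 0 1 s :=
          MeasureTheory.integral_fintype_prod_eq_prod
            (fun i s => (if i = 0 then (if s ≤ a then (1:ℝ) else 0) else 1)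
              * gaussianPDFReal 0 1 s)
      _ = ∏ i : Fin n, (if i = 0 then stdGaussianCDF a else 1) := by
          apply Finset.prod_congr rfl
          intro i _
          by_cases hi : i = 0
          · subst hi
            simp only [eq_self_iff_true, if_true]
            have he2 : (fun s => (if s ≤ a then (1:ℝ) else 0) * gaussianPDFReal 0 1 s)
                = (Set.Iic a).indicator (gaussianPDFReal 0 1) := by
              funext s
              rw [Set.indicator_apply]
              by_cases hs : s ≤ a
              · rw [if_pos hs, if_pos (Set.mem_Iic.mpr hs), one_mul]
              · rw [if_neg hs, if_neg (fun hc => hs (Set.mem_Iic.mp hc)), zero_mul]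
            rw [he2, integral_indicator measurableSet_Iic, ← stdGaussianCDF_eq]
          · simp only [if_neg hi, one_mul]
            exact integral_gaussianPDFReal_eq_one 0 one_ne_zero
      _ = stdGaussianCDF a := by
          rw [Finset.prod_ite_eq' Finset.univ (0 : Fin n) (fun _ => stdGaussianCDF a)]
          simp
  -- compute ∫ h E P
  have hintP2 : ∫ w, h w * (E w * P w) = stdGaussianCDF (a + d) := by
    have e : ∀ w : Fin n → ℝ, h w * (E w * P w)
        = ∏ i, ((if i = 0 then (if w i ≤ a then (1:ℝ) else 0)
              * Real.exp (-(d * w i) - d^2/2) else 1)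
            * gaussianPDFReal 0 1 (w i)) := by
      intro w
      rw [Finset.prod_mul_distrib, Finset.prod_ite_eq' Finset.univ (0 : Fin n)
        (fun i => (if w i ≤ a then (1:ℝ) else 0) * Real.exp (-(d * w i) - d^2/2))]
      simp only [hh_def, hE_def, hP_def, Finset.mem_univ, if_true]
      ring
    calc ∫ w, h w * (E w * P w)
        = ∫ w : Fin n → ℝ, ∏ i, ((if i = 0 then (if w i ≤ a then (1:ℝ) else 0)
              * Real.exp (-(d * w i) - d^2/2) else 1)
            * gaussianPDFReal 0 1 (w i)) := integral_congr_ae (ae_of_all _ e)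
      _ = ∏ i : Fin n, ∫ s : ℝ, (if i = 0 then (if s ≤ a then (1:ℝ) else 0)
              * Real.exp (-(d * s) - d^2/2) else 1)
            * gaussianPDFReal 0 1 s :=
          MeasureTheory.integral_fintype_prod_eq_prod
            (fun i s => (if i = 0 then (if s ≤ a then (1:ℝ) else 0)
              * Real.exp (-(d * s) - d^2/2) else 1) * gaussianPDFReal 0 1 s)
      _ = ∏ i : Fin n, (if i = 0 then stdGaussianCDF (a + d) else 1) := by
          apply Finset.prod_congr rfl
          intro i _
          by_cases hi : i = 0
          · subst hi
            simp only [eq_self_iff_true, if_true]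
            have he2 : (fun s => ((if s ≤ a then (1:ℝ) else 0)
                  * Real.exp (-(d * s) - d^2/2)) * gaussianPDFReal 0 1 s)
                = (Set.Iic a).indicator (fun s => gaussianPDFReal 0 1 (s + d)) := by
              funext s
              rw [Set.indicator_apply]
              by_cases hs : s ≤ a
              · rw [if_pos hs, if_pos (Set.mem_Iic.mpr hs), one_mul,
                  gaussianPDFReal_shift d s]
              · rw [if_neg hs, if_neg (fun hc => hs (Set.mem_Iic.mp hc)), zero_mul, zero_mul]
            rw [he2, integral_indicator measurableSet_Iic, integral_Iic_gaussianPDF_shift]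
          · simp only [if_neg hi, one_mul]
            exact integral_gaussianPDFReal_eq_one 0 one_ne_zero
      _ = stdGaussianCDF (a + d) := by
          rw [Finset.prod_ite_eq' Finset.univ (0 : Fin n) (fun _ => stdGaussianCDF (a + d))]
          simp
  have hgy : gS y = ∫ w, G w * P w := hgen y
  have hle : gS x ≤ stdGaussianCDF (a + d) := by
    have h1 := hineq
    rw [hsplit, hintP1, hintP2, ← hgy, ← hΦa] at h1
    linarith
  by_contra hcon
  push_neg at hcon
  have h1 : stdGaussianCDF (a + d) < stdGaussianCDF (Φinv (gS x)) :=
    stdGaussianCDF_strictMono hcon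
  rw [hΦinv _ (hg01 x)] at h1
  linarith

end Aux

/-- `x ↦ Φ⁻¹(g_Σ(x))` is 1-Lipschitz w.r.t. `‖δ‖_{Σ,2} = √(δᵀΣ⁻¹δ)`. -/
theorem probit_gaussian_smoothing_lipschitz (n : ℕ)
    (Sig : Matrix (Fin n) (Fin n) ℝ) (hSig : Sig.PosDef)
    (f : (Fin n → ℝ) → ℝ) (hf : Measurable f) (hf01 : ∀ v, f v ∈ Set.Icc (0:ℝ) 1)
    (gS : (Fin n → ℝ) → ℝ)
    (hgS : ∀ x, gS x = ∫ ε, f (x + ε) * gaussDensity n Sig ε)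
    (hg01 : ∀ x, gS x ∈ Set.Ioo (0:ℝ) 1)
    (Φinv : ℝ → ℝ)
    (hΦinv : ∀ p ∈ Set.Ioo (0:ℝ) 1, stdGaussianCDF (Φinv p) = p) :
    ∀ x y, |Φinv (gS x) - Φinv (gS y)| ≤
      Real.sqrt ((x - y) ⬝ᵥ (Sig⁻¹ *ᵥ (x - y))) := by
  intro x y
  rcases eq_or_ne x y with rfl | hxy
  · simp only [sub_self, abs_zero]
    exact Real.sqrt_nonneg _
  · have hsym : (y - x) ⬝ᵥ (Sig⁻¹ *ᵥ (y - x)) = (x - y) ⬝ᵥ (Sig⁻¹ *ᵥ (x - y)) := by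
      rw [show y - x = -(x - y) from (neg_sub x y).symm, Matrix.mulVec_neg,
        neg_dotProduct, dotProduct_neg, neg_neg]
    rw [abs_sub_le_iff]
    constructor
    · have := key_step n Sig hSig f hf hf01 gS hgS hg01 Φinv hΦinv x y hxy
      linarith
    · have := key_step n Sig hSig f hf hf01 gS hgS hg01 Φinv hΦinv y x (Ne.symm hxy)
      rw [hsym] at this
      linarith
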